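/- Let γ : H × E → H satisfy the γ-regularity conditions, let M ⊆ H be nonempty and h₀ ∈ M. Suppose there are an open set U ⊆ H with h₀ ∈ U, an integer m ≥ 1, a set V ⊆ ℝ^m_+ open in ℝ^m_+, and a homeomorphism φ : V → U ∩ M which is the restriction of a twice continuously Fréchet differentiable map φ : ℝ^m → H with bounded first and second derivatives and with Dφ(y) injective for every y ∈ V, such that φ⁻¹ extends to a continuously Fréchet differentiable map Φ : H → ℝ^m with bounded derivative. Assume there exist δ₀ > 0 and B₀ ∈ ℰ with F(E ∖ B₀) < ∞ such that for every h ∈ M with ‖h − h₀‖ < δ₀ one has h + γ(h,x) ∈ U ∩ M for F-almost all x ∈ B₀. For h ∈ U ∩ M let P_h denote the orthogonal projection of H onto the finite-dimensional subspace Dφ(Φ(h))(ℝ^m). Then there exists δ > 0 such that: (1) for every h ∈ M with ‖h − h₀‖ < δ, ∫_E ‖γ(h,x) − P_h(γ(h,x))‖ F(dx) < ∞; (2) the map h ↦ ∫_E ( γ(h,x) − P_h(γ(h,x)) ) F(dx) is continuous on {h ∈ M : ‖h − h₀‖ < δ}. -/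

import Mathlib

open MeasureTheory
open scoped ENNReal InnerProductSpace

section Aux
variable {H : Type*} [NormedAddCommGroup H] [InnerProductSpace ℝ H] {m : ℕ}

noncomputable def stmtGram (A : EuclideanSpace ℝ (Fin m) →L[ℝ] H) : Matrix (Fin m) (Fin m) ℝ :=
  Matrix.of fun i j => ⟪A (EuclideanSpace.single i 1), A (EuclideanSpace.single j 1)⟫_ℝ

noncomputable def stmtQaux (N : Matrix (Fin m) (Fin m) ℝ) (A : EuclideanSpace ℝ (Fin m) →L[ℝ] H)
    (w : H) : H :=
  ∑ i, (N.mulVec fun j => ⟪w, A (EuclideanSpace.single j 1)⟫_ℝ) i • A (EuclideanSpace.single i 1)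

noncomputable def stmtQ (A : EuclideanSpace ℝ (Fin m) →L[ℝ] H) (w : H) : H :=
  stmtQaux (stmtGram A)⁻¹ A w

lemma stmtGram_det_ne_zero {A : EuclideanSpace ℝ (Fin m) →L[ℝ] H}
    (hA : Function.Injective ⇑A) : (stmtGram A).det ≠ 0 := by
  have hli : LinearIndependent ℝ (fun i => A (EuclideanSpace.single i (1:ℝ))) := by
    have hb := (EuclideanSpace.basisFun (Fin m) ℝ).toBasis.linearIndependent
    have h2 := hb.map' (A : EuclideanSpace ℝ (Fin m) →ₗ[ℝ] H)
      (LinearMap.ker_eq_bot.2 hA)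
    convert h2 using 1
    funext i
    simp [OrthonormalBasis.coe_toBasis, EuclideanSpace.basisFun_apply, Function.comp]
    rfl
  intro hdet
  obtain ⟨a, ha0, hGa⟩ := Matrix.exists_mulVec_eq_zero_iff.2 hdet
  have hsi : ∀ i, ⟪A (EuclideanSpace.single i (1:ℝ)),
      ∑ j, a j • A (EuclideanSpace.single j (1:ℝ))⟫_ℝ = 0 := by
    intro i
    have h1 := congrFun hGa i
    simp only [Matrix.mulVec, dotProduct, stmtGram, Matrix.of_apply, Pi.zero_apply] at h1
    rw [inner_sum, ← h1]
    congr 1; funext j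
    rw [real_inner_smul_right]; ring
  have hs : ∑ j, a j • A (EuclideanSpace.single j (1:ℝ)) = 0 := by
    have h0 : ⟪∑ j, a j • A (EuclideanSpace.single j (1:ℝ)),
        ∑ j, a j • A (EuclideanSpace.single j (1:ℝ))⟫_ℝ = 0 := by
      rw [sum_inner]
      apply Finset.sum_eq_zero; intro i _
      rw [real_inner_smul_left, hsi i, mul_zero]
    exact inner_self_eq_zero.1 h0
  exact ha0 (funext fun i => Fintype.linearIndependent_iff.1 hli a hs i)

lemma stmtQ_mem (A : EuclideanSpace ℝ (Fin m) →L[ℝ] H) (w : H) :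
    stmtQ A w ∈ Set.range ⇑A := by
  refine ⟨∑ i, ((stmtGram A)⁻¹.mulVec fun j => ⟪w, A (EuclideanSpace.single j 1)⟫_ℝ) i •
    EuclideanSpace.single i (1:ℝ), ?_⟩
  rw [stmtQ, stmtQaux, map_sum]
  exact Finset.sum_congr rfl fun i _ => _root_.map_smul A _ _

lemma stmtQ_orth {A : EuclideanSpace ℝ (Fin m) →L[ℝ] H} (hA : Function.Injective ⇑A) (w : H) :
    ∀ u ∈ Set.range ⇑A, ⟪w - stmtQ A w, u⟫_ℝ = 0 := by
  have hdet := stmtGram_det_ne_zero hA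
  set c : Fin m → ℝ := fun j => ⟪w, A (EuclideanSpace.single j 1)⟫_ℝ with hc
  have key : ∀ i, ⟪stmtQ A w, A (EuclideanSpace.single i 1)⟫_ℝ = c i := by
    intro i
    have h1 : ⟪stmtQ A w, A (EuclideanSpace.single i 1)⟫_ℝ
        = ∑ k, ((stmtGram A)⁻¹.mulVec c) k * stmtGram A k i := by
      rw [stmtQ, stmtQaux, sum_inner]
      congr 1; funext k
      rw [real_inner_smul_left]; rfl
    have h2 : ∑ k, ((stmtGram A)⁻¹.mulVec c) k * stmtGram A k i
        = ((stmtGram A).transpose.mulVec ((stmtGram A)⁻¹.mulVec c)) i := by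
      simp only [Matrix.mulVec, dotProduct, Matrix.transpose_apply]
      congr 1; funext k; ring
    have h3 : (stmtGram A).transpose = stmtGram A := by
      ext i j; exact real_inner_comm _ _
    rw [h1, h2, h3, Matrix.mulVec_mulVec,
      Matrix.mul_nonsing_inv _ (isUnit_iff_ne_zero.2 hdet), Matrix.one_mulVec]
  rintro u ⟨z, rfl⟩
  have hz : A z = ∑ i, ((EuclideanSpace.basisFun (Fin m) ℝ).repr z i) •
      A (EuclideanSpace.single i 1) := by
    conv_lhs => rw [← (EuclideanSpace.basisFun (Fin m) ℝ).sum_repr z]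
    rw [map_sum]
    congr 1; funext i
    rw [_root_.map_smul, EuclideanSpace.basisFun_apply]
  rw [hz, inner_sum]
  apply Finset.sum_eq_zero; intro i _
  rw [real_inner_smul_right, inner_sub_left, key i]
  simp [hc]

lemma stmt_proj_eq {A : EuclideanSpace ℝ (Fin m) →L[ℝ] H} {w p q : H}
    (hp : p ∈ Set.range ⇑A) (hq : q ∈ Set.range ⇑A)
    (hop : ∀ u ∈ Set.range ⇑A, ⟪w - p, u⟫_ℝ = 0)
    (hoq : ∀ u ∈ Set.range ⇑A, ⟪w - q, u⟫_ℝ = 0) : p = q := by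
  obtain ⟨a, rfl⟩ := hp
  obtain ⟨b, rfl⟩ := hq
  have hmem : A a - A b ∈ Set.range ⇑A := ⟨a - b, by rw [map_sub]⟩
  have h1 := hop _ hmem
  have h2 := hoq _ hmem
  have h3 : ⟪A a - A b, A a - A b⟫_ℝ = 0 := by
    have h4 : ⟪w - A b, A a - A b⟫_ℝ - ⟪w - A a, A a - A b⟫_ℝ
        = ⟪A a - A b, A a - A b⟫_ℝ := by
      rw [← inner_sub_left]; congr 1; abel
    rw [← h4, h1, h2]; ring
  exact sub_eq_zero.1 (inner_self_eq_zero.1 h3)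

lemma stmt_proj_min {A : EuclideanSpace ℝ (Fin m) →L[ℝ] H} {w p : H}
    (hp : p ∈ Set.range ⇑A)
    (hop : ∀ u ∈ Set.range ⇑A, ⟪w - p, u⟫_ℝ = 0)
    {v : H} (hv : v ∈ Set.range ⇑A) : ‖w - p‖ ≤ ‖w - v‖ := by
  obtain ⟨a, rfl⟩ := hp
  obtain ⟨b, rfl⟩ := hv
  have hmem : A a - A b ∈ Set.range ⇑A := ⟨a - b, by rw [map_sub]⟩
  have hkey : ‖w - A b‖ ^ 2 = ‖w - A a‖ ^ 2 + ‖A a - A b‖ ^ 2 := by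
    have hsplit : w - A b = (w - A a) + (A a - A b) := by abel
    rw [hsplit, norm_add_sq_real, hop _ hmem]
    ring
  nlinarith [norm_nonneg (w - A b), norm_nonneg (w - A a), norm_nonneg (A a - A b)]

lemma stmt_continuous_Qaux :
    Continuous (fun p : Matrix (Fin m) (Fin m) ℝ × ((EuclideanSpace ℝ (Fin m) →L[ℝ] H) × H) =>
      stmtQaux p.1 p.2.1 p.2.2) := by
  unfold stmtQaux
  apply continuous_finset_sum; intro i _
  apply Continuous.smul
  · simp only [Matrix.mulVec, dotProduct]
    apply continuous_finset_sum; intro j _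
    refine Continuous.mul ?_ ?_
    · exact ((continuous_apply j).comp ((continuous_apply i).comp continuous_fst))
    · exact ((continuous_snd.comp continuous_snd).inner
        ((continuous_fst.comp continuous_snd).clm_apply continuous_const))
  · exact (continuous_fst.comp continuous_snd).clm_apply continuous_const

lemma stmt_taylor {E' : Type*} [NormedAddCommGroup E'] [NormedSpace ℝ E']
    {H' : Type*} [NormedAddCommGroup H'] [NormedSpace ℝ H']
    (φ : E' → H') (hφ : ContDiff ℝ 2 φ) (C₂ : ℝ)
    (hC₂ : ∀ y, ‖fderiv ℝ (fderiv ℝ φ) y‖ ≤ C₂) (y y' : E') :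
    ‖φ y' - φ y - fderiv ℝ φ y (y' - y)‖ ≤ C₂ * ‖y' - y‖ ^ 2 := by
  have hC₂0 : 0 ≤ C₂ := le_trans (norm_nonneg (fderiv ℝ (fderiv ℝ φ) y)) (hC₂ y)
  have hd1 : ∀ u, DifferentiableAt ℝ φ u := fun u =>
    (hφ.differentiable (by norm_num)).differentiableAt
  have hdf : ∀ u, DifferentiableAt ℝ (fderiv ℝ φ) u := fun u =>
    ((hφ.fderiv_right (m := 1) (le_refl _)).differentiable one_ne_zero).differentiableAt
  have hlip : ∀ u v : E', ‖fderiv ℝ φ u - fderiv ℝ φ v‖ ≤ C₂ * ‖u - v‖ := fun u v =>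
    Convex.norm_image_sub_le_of_norm_fderiv_le (fun x _ => hdf x) (fun x _ => hC₂ x)
      convex_univ trivial trivial
  set ψ : E' → H' := fun u => φ u - fderiv ℝ φ y u with hψdef
  have hψ : ∀ u, HasFDerivAt ψ (fderiv ℝ φ u - fderiv ℝ φ y) u := fun u =>
    ((hd1 u).hasFDerivAt).sub (fderiv ℝ φ y).hasFDerivAt
  have hball : ∀ u ∈ Metric.closedBall y ‖y' - y‖,
      ‖fderiv ℝ φ u - fderiv ℝ φ y‖ ≤ C₂ * ‖y' - y‖ := by
    intro u hu
    refine le_trans (hlip u y) (mul_le_mul_of_nonneg_left ?_ hC₂0)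
    simpa [dist_eq_norm] using hu
  have hmem : y' ∈ Metric.closedBall y ‖y' - y‖ := by
    simp [Metric.mem_closedBall, dist_eq_norm]
  have hmem0 : y ∈ Metric.closedBall y ‖y' - y‖ := by
    simp [Metric.mem_closedBall, norm_nonneg]
  have := Convex.norm_image_sub_le_of_norm_hasFDerivWithin_le
    (fun u hu => (hψ u).hasFDerivWithinAt) hball (convex_closedBall y ‖y' - y‖) hmem0 hmem
  have heq : ψ y' - ψ y = φ y' - φ y - fderiv ℝ φ y (y' - y) := by
    simp only [hψdef, map_sub]
    abel
  calc ‖φ y' - φ y - fderiv ℝ φ y (y' - y)‖ = ‖ψ y' - ψ y‖ := by rw [heq]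
    _ ≤ C₂ * ‖y' - y‖ * ‖y' - y‖ := this
    _ = C₂ * ‖y' - y‖ ^ 2 := by ring

lemma stmt_Qaux_cwa {X : Type*} [TopologicalSpace X] {N : X → Matrix (Fin m) (Fin m) ℝ}
    {A : X → EuclideanSpace ℝ (Fin m) →L[ℝ] H} {w : X → H} {s : Set X} {x₀ : X}
    (hN : ContinuousWithinAt N s x₀) (hA : ContinuousWithinAt A s x₀)
    (hw : ContinuousWithinAt w s x₀) :
    ContinuousWithinAt (fun x => stmtQaux (N x) (A x) (w x)) s x₀ := by
  have hcomp : ContinuousWithinAt (fun x => (N x, (A x, w x))) s x₀ := hN.prodMk (hA.prodMk hw)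
  exact ContinuousAt.comp_continuousWithinAt (f := fun x => (N x, (A x, w x)))
    stmt_continuous_Qaux.continuousAt hcomp

lemma stmt_Qaux_cont_w (N : Matrix (Fin m) (Fin m) ℝ) (A : EuclideanSpace ℝ (Fin m) →L[ℝ] H) :
    Continuous (fun w : H => stmtQaux N A w) :=
  Continuous.comp (f := fun w : H => (N, (A, w))) stmt_continuous_Qaux
    (continuous_const.prodMk (continuous_const.prodMk continuous_id))

end Aux

set_option maxHeartbeats 1000000 in
theorem stmt_13
    {H E : Type*}
    [NormedAddCommGroup H] [InnerProductSpace ℝ H] [CompleteSpace H]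
    [TopologicalSpace.SeparableSpace H] [MeasurableSpace H] [BorelSpace H]
    [MeasurableSpace E] (F : Measure E) [SigmaFinite F]
    (γ : H → E → H) (hγmeas : Measurable (Function.uncurry γ))
    (ρ : ℕ → E → ℝ)
    (hρmeas : ∀ n, Measurable (ρ n))
    (hρnonneg : ∀ n x, 0 ≤ ρ n x)
    (hρint : ∀ n, Integrable (fun x => ρ n x ^ 2) F)
    (hγLip : ∀ n : ℕ, ∀ x : E, ∀ h₁ h₂ : H, ‖h₁‖ ≤ (n : ℝ) → ‖h₂‖ ≤ (n : ℝ) →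
      ‖γ h₁ x - γ h₂ x‖ ≤ ρ n x * ‖h₁ - h₂‖)
    (hγbd : ∀ n : ℕ, ∀ x : E, ∀ h : H, ‖h‖ ≤ (n : ℝ) → ‖γ h x‖ ≤ ρ n x)
    (M : Set H) (hMne : M.Nonempty) (h₀ : H) (hh₀ : h₀ ∈ M)
    (U : Set H) (hU : IsOpen U) (hh₀U : h₀ ∈ U)
    (m : ℕ) [NeZero m] (hm : 1 ≤ m)
    (V : Set (EuclideanSpace ℝ (Fin m)))
    (hV : ∃ Vt : Set (EuclideanSpace ℝ (Fin m)), IsOpen Vt ∧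
      Vt ∩ {y : EuclideanSpace ℝ (Fin m) | 0 ≤ y 0} = V)
    (φ : EuclideanSpace ℝ (Fin m) → H)
    (hφC2 : ContDiff ℝ 2 φ)
    (hφbd1 : ∃ C : ℝ, ∀ y, ‖fderiv ℝ φ y‖ ≤ C)
    (hφbd2 : ∃ C : ℝ, ∀ y, ‖fderiv ℝ (fderiv ℝ φ) y‖ ≤ C)
    (hφinj : ∀ y ∈ V, Function.Injective (fderiv ℝ φ y))
    (hφbij : Set.BijOn φ V (U ∩ M))
    (Φ : H → EuclideanSpace ℝ (Fin m))
    (hΦC1 : ContDiff ℝ 1 Φ)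
    (hΦbd : ∃ C : ℝ, ∀ h, ‖fderiv ℝ Φ h‖ ≤ C)
    (hΦφ : ∀ y ∈ V, Φ (φ y) = y)
    (hφΦ : ∀ h ∈ U ∩ M, φ (Φ h) = h)
    (δ₀ : ℝ) (hδ₀ : 0 < δ₀)
    (B₀ : Set E) (hB₀ : MeasurableSet B₀) (hB₀fin : F B₀ᶜ < ⊤)
    (hjump : ∀ h ∈ M, ‖h - h₀‖ < δ₀ → ∀ᵐ x ∂F, x ∈ B₀ → h + γ h x ∈ U ∩ M)
    -- P h is the orthogonal projection of H onto the tangent space Dφ(Φ(h))(ℝ^m)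
    (P : H → H → H)
    (hP : ∀ h ∈ U ∩ M, ∀ w : H,
      P h w ∈ Set.range (fderiv ℝ φ (Φ h)) ∧
      ∀ u ∈ Set.range (fderiv ℝ φ (Φ h)), ⟪w - P h w, u⟫_ℝ = 0) :
    ∃ δ : ℝ, 0 < δ ∧
      (∀ h ∈ M, ‖h - h₀‖ < δ → Integrable (fun x => γ h x - P h (γ h x)) F) ∧
      ContinuousOn (fun h : H => ∫ x, (γ h x - P h (γ h x)) ∂F)
        {h ∈ M | ‖h - h₀‖ < δ} := by
  classical
  have hSC : SecondCountableTopology H := UniformSpace.secondCountable_of_separable H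
  obtain ⟨C₂, hC₂⟩ := hφbd2
  obtain ⟨CΦ, hCΦ⟩ := hΦbd
  have hC₂0 : 0 ≤ C₂ := le_trans (norm_nonneg (fderiv ℝ (fderiv ℝ φ) 0)) (hC₂ 0)
  have hCΦ0 : 0 ≤ CΦ := le_trans (norm_nonneg _) (hCΦ 0)
  have hΦdiff : ∀ u, DifferentiableAt ℝ Φ u := fun u =>
    (hΦC1.differentiable one_ne_zero).differentiableAt
  have hΦlip : ∀ a b : H, ‖Φ a - Φ b‖ ≤ CΦ * ‖a - b‖ := fun a b =>
    Convex.norm_image_sub_le_of_norm_fderiv_le (fun x _ => hΦdiff x) (fun x _ => hCΦ x)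
      convex_univ trivial trivial
  obtain ⟨r, hr0, hrU⟩ := Metric.isOpen_iff.1 hU h₀ hh₀U
  set n : ℕ := ⌈‖h₀‖⌉₊ + 1 with hn_def
  set δ : ℝ := min δ₀ (min r 1) with hδ_def
  have hδ0 : 0 < δ := lt_min hδ₀ (lt_min hr0 one_pos)
  set S : Set H := {h ∈ M | ‖h - h₀‖ < δ} with hS_def
  have hSU : ∀ h ∈ S, h ∈ U ∩ M := by
    intro h hh
    refine ⟨hrU ?_, hh.1⟩
    rw [Metric.mem_ball, dist_eq_norm]
    exact lt_of_lt_of_le hh.2 (le_trans (min_le_right _ _) (min_le_left _ _))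
  have hSn : ∀ h : H, ‖h - h₀‖ < δ → ‖h‖ ≤ (n : ℝ) := by
    intro h hh
    have h1 : ‖h‖ ≤ ‖h - h₀‖ + ‖h₀‖ := by
      have := norm_add_le (h - h₀) h₀
      simpa using this
    have h2 : ‖h - h₀‖ < 1 :=
      lt_of_lt_of_le hh (le_trans (min_le_right _ _) (min_le_right _ _))
    have h3 : ‖h₀‖ ≤ (⌈‖h₀‖⌉₊ : ℝ) := Nat.le_ceil _
    have h4 : (n : ℝ) = (⌈‖h₀‖⌉₊ : ℝ) + 1 := by rw [hn_def]; push_cast; ring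
    linarith
  set A : H → (EuclideanSpace ℝ (Fin m) →L[ℝ] H) := fun h => fderiv ℝ φ (Φ h) with hA_def
  have hΦV : ∀ h ∈ U ∩ M, Φ h ∈ V := by
    intro h hh
    obtain ⟨y, hyV, hyφ⟩ := hφbij.surjOn hh
    rw [← hyφ, hΦφ y hyV]
    exact hyV
  have hAinj : ∀ h ∈ U ∩ M, Function.Injective ⇑(A h) := fun h hh => hφinj _ (hΦV h hh)
  have hPQ : ∀ h ∈ U ∩ M, ∀ w, P h w = stmtQ (A h) w := fun h hh w =>
    stmt_proj_eq (hP h hh w).1 (stmtQ_mem (A h) w) (hP h hh w).2 (stmtQ_orth (hAinj h hh) w)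
  have hmeas : ∀ h ∈ S, AEStronglyMeasurable (fun x => γ h x - P h (γ h x)) F := by
    intro h hh
    have hγm : Measurable (fun x => γ h x) :=
      hγmeas.comp (measurable_const.prodMk measurable_id)
    have hQc : Continuous (fun w : H => stmtQaux ((stmtGram (A h))⁻¹) (A h) w) :=
      stmt_Qaux_cont_w _ _
    have heq : (fun x => γ h x - P h (γ h x))
        = fun x => γ h x - stmtQaux ((stmtGram (A h))⁻¹) (A h) (γ h x) := by
      funext x
      rw [hPQ h (hSU h hh)]
      rfl
    rw [heq]
    exact (hγm.sub (hQc.measurable.comp hγm)).aestronglyMeasurable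
  set K : ℝ := C₂ * CΦ ^ 2 with hK_def
  have hK0 : 0 ≤ K := mul_nonneg hC₂0 (pow_nonneg hCΦ0 2)
  set bound : E → ℝ :=
    fun x => (K + 1) * ρ n x ^ 2 + B₀ᶜ.indicator (fun _ => (1 : ℝ)) x with hbound_def
  have hbound_int : Integrable bound F := by
    apply Integrable.add
    · exact (hρint n).const_mul _
    · exact (integrable_indicator_iff hB₀.compl).2 ((integrableOn_const_iff).2 (Or.inr hB₀fin))
  have hptbd : ∀ h ∈ S, ∀ᵐ x ∂F, ‖γ h x - P h (γ h x)‖ ≤ bound x := by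
    intro h hh
    have hhUM := hSU h hh
    have hhn : ‖h‖ ≤ (n : ℝ) := hSn h hh.2
    have hδδ₀ : ‖h - h₀‖ < δ₀ := lt_of_lt_of_le hh.2 (min_le_left _ _)
    filter_upwards [hjump h hh.1 hδδ₀] with x hx
    have hγbd' : ‖γ h x‖ ≤ ρ n x := hγbd n x h hhn
    have hρ0 : 0 ≤ ρ n x := hρnonneg n x
    by_cases hxB : x ∈ B₀
    · have hh' : h + γ h x ∈ U ∩ M := hx hxB
      set h2 : H := h + γ h x with hh2_def
      have hγeq : γ h x = φ (Φ h2) - φ (Φ h) := by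
        rw [hφΦ _ hh', hφΦ h hhUM, hh2_def]; abel
      have hstep1 : ‖γ h x - P h (γ h x)‖ ≤ ‖γ h x - (A h) (Φ h2 - Φ h)‖ :=
        stmt_proj_min (hP h hhUM (γ h x)).1 (hP h hhUM (γ h x)).2 ⟨_, rfl⟩
      have hstep2 : ‖γ h x - (A h) (Φ h2 - Φ h)‖ ≤ C₂ * ‖Φ h2 - Φ h‖ ^ 2 := by
        rw [hγeq]
        exact stmt_taylor φ hφC2 C₂ hC₂ (Φ h) (Φ h2)
      have hstep3 : ‖Φ h2 - Φ h‖ ≤ CΦ * ρ n x := by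
        refine le_trans (hΦlip h2 h) ?_
        have he : h2 - h = γ h x := by rw [hh2_def]; abel
        rw [he]
        exact mul_le_mul_of_nonneg_left hγbd' hCΦ0
      have hstep4 : C₂ * ‖Φ h2 - Φ h‖ ^ 2 ≤ C₂ * (CΦ * ρ n x) ^ 2 :=
        mul_le_mul_of_nonneg_left (pow_le_pow_left₀ (norm_nonneg _) hstep3 2) hC₂0
      have hind : B₀ᶜ.indicator (fun _ => (1 : ℝ)) x = 0 :=
        Set.indicator_of_notMem (by simpa using hxB) _
      have hfin : C₂ * (CΦ * ρ n x) ^ 2 ≤ bound x := by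
        rw [hbound_def]
        simp only [hind]
        have hsq : 0 ≤ ρ n x ^ 2 := sq_nonneg _
        nlinarith [hK_def]
      linarith [hstep1, hstep2, hstep4, hfin]
    · have hstep : ‖γ h x - P h (γ h x)‖ ≤ ‖γ h x - 0‖ :=
        stmt_proj_min (hP h hhUM (γ h x)).1 (hP h hhUM (γ h x)).2 ⟨0, map_zero _⟩
      rw [sub_zero] at hstep
      have hind : B₀ᶜ.indicator (fun _ => (1 : ℝ)) x = 1 :=
        Set.indicator_of_mem (by simpa using hxB) _
      have hρsq : ρ n x ≤ 1 + ρ n x ^ 2 := by nlinarith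
      have hfin : ρ n x ≤ bound x := by
        rw [hbound_def]
        simp only [hind]
        nlinarith [sq_nonneg (ρ n x)]
      linarith [hstep, hγbd', hfin]
  refine ⟨δ, hδ0, ?_, ?_⟩
  · intro h hM hlt
    have hh : h ∈ S := ⟨hM, hlt⟩
    exact Integrable.mono' hbound_int (hmeas h hh) (hptbd h hh)
  · intro h' hh'
    have hh'UM := hSU h' hh'
    have hdet' : (stmtGram (A h')).det ≠ 0 := stmtGram_det_ne_zero (hAinj h' hh'UM)
    have hAcont : Continuous A := (hφC2.continuous_fderiv (by norm_num)).comp hΦC1.continuous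
    have hGc : Continuous (fun h => stmtGram (A h)) := by
      apply continuous_matrix
      intro i j
      exact Continuous.inner (hAcont.clm_apply continuous_const)
        (hAcont.clm_apply continuous_const)
    have hGinv : ContinuousAt (fun h => (stmtGram (A h))⁻¹) h' := by
      have h1 : ContinuousAt Ring.inverse ((stmtGram (A h')).det) := by
        rw [Ring.inverse_eq_inv']
        exact continuousAt_inv₀ hdet'
      have h2 : ContinuousAt (Inv.inv ∘ fun h => stmtGram (A h)) h' :=
        ContinuousAt.comp (continuousAt_matrix_inv _ h1) hGc.continuousAt
      exact h2
    apply MeasureTheory.continuousWithinAt_of_dominated (bound := bound)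
    · filter_upwards [self_mem_nhdsWithin] with h hh
      exact hmeas h hh
    · filter_upwards [self_mem_nhdsWithin] with h hh
      exact hptbd h hh
    · exact hbound_int
    · refine Filter.Eventually.of_forall (fun x => ?_)
      have hγcw : ContinuousWithinAt (fun h => γ h x) S h' := by
        have hlipOn : LipschitzOnWith (Real.toNNReal (ρ n x)) (fun h => γ h x)
            (Metric.closedBall 0 (n : ℝ)) := by
          apply LipschitzOnWith.of_dist_le_mul
          intro a ha b hb
          rw [dist_eq_norm, dist_eq_norm, Real.coe_toNNReal _ (hρnonneg n x)]
          exact hγLip n x a b (by simpa using ha) (by simpa using hb)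
        have hsub : S ⊆ Metric.closedBall 0 (n : ℝ) := by
          intro h hh
          rw [Metric.mem_closedBall, dist_zero_right]
          exact hSn h hh.2
        exact ((hlipOn.continuousOn).mono hsub) h' hh'
      have hQcw : ContinuousWithinAt
          (fun h => stmtQaux ((stmtGram (A h))⁻¹) (A h) (γ h x)) S h' := by
        exact stmt_Qaux_cwa hGinv.continuousWithinAt hAcont.continuousWithinAt hγcw
      refine (hγcw.sub hQcw).congr ?_ ?_
      · intro h hh
        rw [hPQ h (hSU h hh)]
        rfl
      · rw [hPQ h' hh'UM]
        rfl
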